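/- A topological space is I-favorable if and only if it has a club filter. -/

import Mathlib

open Set TopologicalSpace

variable (X : Type*) [TopologicalSpace X]

/-- A valid move of Player I: a finite family of nonempty open sets. -/
def IMove (A : Set (Set X)) : Prop :=
  A.Finite ∧ ∀ U ∈ A, IsOpen U ∧ U.Nonempty

/-- A valid response of Player II to the family `A`: a finite family of nonempty
open sets such that every member of `A` contains some member of `B`. -/
def IIMove (A B : Set (Set X)) : Prop :=
  IMove X B ∧ ∀ U ∈ A, ∃ V ∈ B, V ⊆ U

/-- `X` is I-favorable: Player I has a winning strategy in the finite open-open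
game. A strategy is a function from histories of Player II's moves to the next
move of Player I; it is winning if for every play in which Player II always
responds validly, each tail union of Player II's families is dense. -/
def IFavorable : Prop :=
  ∃ σ : List (Set (Set X)) → Set (Set X),
    (∀ hist, IMove X (σ hist)) ∧
    ∀ B : ℕ → Set (Set X),
      (∀ n, IIMove X (σ ((List.range n).map B)) (B n)) →
      ∀ k, Dense (⋃ (n : ℕ) (_ : k ≤ n), ⋃₀ B n)

/-- Player II has a winning strategy in the finite open-open game: a function
from histories of Player I's moves to responses of Player II which are valid,
and such that whenever Player I plays validly, some tail union of Player II's
families fails to be dense. -/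
def IIFavorable : Prop :=
  ∃ τ : List (Set (Set X)) → Set (Set X),
    ∀ A : ℕ → Set (Set X), (∀ n, IMove X (A n)) →
      (∀ n, IIMove X (A n) (τ ((List.range (n + 1)).map A))) ∧
      ∃ k, ¬ Dense (⋃ (n : ℕ) (_ : k ≤ n), ⋃₀ τ ((List.range (n + 1)).map A))

/-- `Q` is a π-base for `X`: a family of nonempty open sets such that every
nonempty open set contains a member of the family. -/
def IsPiBase (Q : Set (Set X)) : Prop :=
  (∀ U ∈ Q, IsOpen U ∧ U.Nonempty) ∧
  ∀ V : Set X, IsOpen V → V.Nonempty → ∃ U ∈ Q, U ⊆ V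

/-- `C` is a club filter with respect to the π-base `Q`. -/
def IsClubFilter (Q : Set (Set X)) (C : Set (Set (Set X))) : Prop :=
  (∀ P ∈ C, P.Countable ∧ P ⊆ Q) ∧
  (∀ P : ℕ → Set (Set X), (∀ n, P n ∈ C) → Monotone P → (⋃ n, P n) ∈ C) ∧
  (∀ A : Set (Set X), A.Countable → A ⊆ Q → ∃ P ∈ C, A ⊆ P) ∧
  (∀ V : Set X, IsOpen V → V.Nonempty →
    ∀ P ∈ C, ∃ W ∈ P, ∀ U ∈ P, U ⊆ W → (U ∩ V).Nonempty)

/-! ### Auxiliary lemmas -/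

/-- A finite set inside a monotone union is inside one of the pieces. -/
lemma IFav.finite_subset_mono {α : Type*} {P : ℕ → Set α} (hmono : Monotone P) {b : Set α}
    (hb : b.Finite) (hsub : b ⊆ ⋃ n, P n) : ∃ m, b ⊆ P m := by
  revert hsub
  refine Set.Finite.induction_on (motive := fun b _ => b ⊆ ⋃ n, P n → ∃ m, b ⊆ P m) b hb ?_ ?_
  · intro _; exact ⟨0, empty_subset _⟩
  · intro a s ha hs ih hsub
    obtain ⟨m, hm⟩ := ih ((subset_insert a s).trans hsub)
    obtain ⟨m', hm'⟩ := mem_iUnion.1 (hsub (mem_insert a s))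
    exact ⟨max m m', insert_subset (hmono (le_max_right m m') hm')
      (hm.trans (hmono (le_max_left m m')))⟩

/-- A list of finite sets inside a monotone union is (entrywise) inside one of the pieces. -/
lemma IFav.exists_bound_list {α : Type*} {P : ℕ → Set α} (hmono : Monotone P)
    (h : List (Set α)) (hh : ∀ b ∈ h, b.Finite ∧ b ⊆ ⋃ n, P n) :
    ∃ m, ∀ b ∈ h, b ⊆ P m := by
  induction h with
  | nil => exact ⟨0, by simp⟩
  | cons a t ih =>
    obtain ⟨m, hm⟩ := ih (fun b hb => hh b (List.mem_cons_of_mem a hb))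
    obtain ⟨ha1, ha2⟩ := hh a List.mem_cons_self
    obtain ⟨m', hm'⟩ := IFav.finite_subset_mono hmono ha1 ha2
    refine ⟨max m m', fun b hb => ?_⟩
    rcases List.mem_cons.1 hb with rfl | hb
    · exact hm'.trans (hmono (le_max_right _ _))
    · exact (hm b hb).trans (hmono (le_max_left _ _))

/-- Lists with entries in a countable set form a countable set. -/
lemma IFav.countable_lists {α : Type*} {T : Set α} (hT : T.Countable) :
    {h : List α | ∀ b ∈ h, b ∈ T}.Countable := by
  haveI := hT.to_subtype
  have hsub : {h : List α | ∀ b ∈ h, b ∈ T} ⊆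
      Set.range (fun l : List T => l.map Subtype.val) := by
    intro h hh
    refine ⟨h.pmap (fun b hb => (⟨b, hb⟩ : T)) hh, ?_⟩
    simp [List.map_pmap]
  exact (Set.countable_range _).mono hsub

/-! ### Forward direction -/

lemma IFav.forward (X : Type*) [TopologicalSpace X] (h : IFavorable X) :
    ∃ Q : Set (Set X), IsPiBase X Q ∧ ∃ C : Set (Set (Set X)), IsClubFilter X Q C := by
  obtain ⟨σ, hσ1, hσ2⟩ := h
  refine ⟨{U | IsOpen U ∧ U.Nonempty},
    ⟨fun U hU => hU, fun V hV hVne => ⟨V, ⟨hV, hVne⟩, subset_rfl⟩⟩, ?_⟩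
  have hσQ : ∀ l, σ l ⊆ {U : Set X | IsOpen U ∧ U.Nonempty} := fun l U hU => (hσ1 l).2 U hU
  refine ⟨{P | P.Countable ∧ P ⊆ {U | IsOpen U ∧ U.Nonempty} ∧
      ∀ l : List (Set (Set X)), (∀ b ∈ l, b.Finite ∧ b ⊆ P) → σ l ⊆ P}, ?_, ?_, ?_, ?_⟩
  · exact fun P hP => ⟨hP.1, hP.2.1⟩
  · -- increasing unions
    rintro P hP hmono
    refine ⟨countable_iUnion fun n => (hP n).1, iUnion_subset fun n => (hP n).2.1, ?_⟩
    intro l hl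
    obtain ⟨m, hm⟩ := IFav.exists_bound_list hmono l hl
    exact ((hP m).2.2 l fun b hb => ⟨(hl b hb).1, hm b hb⟩).trans (subset_iUnion P m)
  · -- unboundedness: closure construction
    intro A hA hAQ
    set step : Set (Set X) → Set (Set X) :=
      fun s => s ∪ ⋃ l ∈ {l : List (Set (Set X)) | ∀ b ∈ l, b.Finite ∧ b ⊆ s}, σ l with hstep
    set R : ℕ → Set (Set X) := fun n => step^[n] A with hR
    have hRsucc : ∀ n, R (n + 1) = step (R n) := by
      intro n; simp only [hR, Function.iterate_succ_apply']
    have hRmono : Monotone R := by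
      apply monotone_nat_of_le_succ
      intro n; rw [hRsucc]; exact subset_union_left
    have hRc : ∀ n, (R n).Countable := by
      intro n
      induction n with
      | zero => exact hA
      | succ n ih =>
        rw [hRsucc]
        refine ih.union ?_
        have hT : {l : List (Set (Set X)) | ∀ b ∈ l, b.Finite ∧ b ⊆ R n}.Countable :=
          IFav.countable_lists (Set.countable_setOf_finite_subset ih)
        exact hT.biUnion fun l _ => (hσ1 l).1.countable
    have hRQ : ∀ n, R n ⊆ {U : Set X | IsOpen U ∧ U.Nonempty} := by
      intro n
      induction n with
      | zero => exact hAQ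
      | succ n ih =>
        rw [hRsucc]
        exact union_subset ih (iUnion₂_subset fun l _ => hσQ l)
    refine ⟨⋃ n, R n, ⟨countable_iUnion hRc, iUnion_subset hRQ, ?_⟩, ?_⟩
    · intro l hl
      obtain ⟨m, hm⟩ := IFav.exists_bound_list hRmono l hl
      have : σ l ⊆ R (m + 1) := by
        rw [hRsucc]
        exact (subset_iUnion₂ (s := fun l _ => σ l) l
          (fun b hb => ⟨(hl b hb).1, hm b hb⟩)).trans subset_union_right
      exact this.trans (subset_iUnion R (m + 1))
    · exact (subset_iUnion R 0).trans' (by simp [hR])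
  · -- condition (3) from winning-ness of σ
    intro V hV hVne P hP
    by_contra hcon
    push_neg at hcon
    choose! u hu1 hu2 hu3 using hcon
    set hist : ℕ → List (Set (Set X)) :=
      fun n => Nat.rec [] (fun _ l => l ++ [u '' σ l]) n with hhist
    have hist_succ : ∀ n, hist (n + 1) = hist n ++ [u '' σ (hist n)] := fun n => rfl
    set B : ℕ → Set (Set X) := fun n => u '' σ (hist n) with hB
    have histeq : ∀ n, (List.range n).map B = hist n := by
      intro n
      induction n with
      | zero => rfl
      | succ n ih => rw [List.range_succ, List.map_append, ih]; rfl
    have hinv : ∀ n, ∀ b ∈ hist n, b.Finite ∧ b ⊆ P := by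
      intro n
      induction n with
      | zero => simp [hhist]
      | succ n ih =>
        intro b hb
        rw [hist_succ, List.mem_append] at hb
        rcases hb with hb | hb
        · exact ih b hb
        · have hb' : b = u '' σ (hist n) := by simpa using hb
          subst hb'
          have hσP : σ (hist n) ⊆ P := hP.2.2 _ ih
          refine ⟨(hσ1 _).1.image u, ?_⟩
          rintro x ⟨W, hW, rfl⟩
          exact hu1 W (hσP hW)
    have hσP : ∀ n, σ (hist n) ⊆ P := fun n => hP.2.2 _ (hinv n)
    have hvalid : ∀ n, IIMove X (σ ((List.range n).map B)) (B n) := by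
      intro n
      rw [histeq]
      refine ⟨⟨(hσ1 _).1.image u, ?_⟩, ?_⟩
      · rintro U ⟨W, hW, rfl⟩
        exact hP.2.1 (hu1 W (hσP n hW))
      · intro U hU
        exact ⟨u U, mem_image_of_mem u hU, hu2 U (hσP n hU)⟩
    have hdense := hσ2 B hvalid 0
    obtain ⟨x, hxV, hxS⟩ := dense_iff_inter_open.1 hdense V hV hVne
    simp only [mem_iUnion, mem_sUnion] at hxS
    obtain ⟨n, -, W', hW', hxW'⟩ := hxS
    obtain ⟨W, hW, rfl⟩ := hW'
    have hx : x ∈ u W ∩ V := ⟨hxW', hxV⟩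
    have hemp := hu3 W (hσP n hW)
    rw [hemp] at hx
    exact hx

/-! ### Backward direction -/

lemma IFav.backward (X : Type*) [TopologicalSpace X] (Q : Set (Set X)) (hQ : IsPiBase X Q)
    (C : Set (Set (Set X))) (hC : IsClubFilter X Q C) : IFavorable X := by
  obtain ⟨hQ1, hQ2⟩ := hQ
  obtain ⟨hC1, hC2, hC3, hC4⟩ := hC
  by_cases hX : Nonempty X
  · -- main case
    obtain ⟨q₀, hq₀Q, -⟩ := hQ2 univ isOpen_univ univ_nonempty
    -- a choice of π-base element inside each nonempty open set
    have hq : ∀ V : Set X, ∃ W ∈ Q, (IsOpen V → V.Nonempty → W ⊆ V) := by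
      intro V
      by_cases h : IsOpen V ∧ V.Nonempty
      · obtain ⟨W, hW, hWV⟩ := hQ2 V h.1 h.2
        exact ⟨W, hW, fun _ _ => hWV⟩
      · exact ⟨q₀, hq₀Q, fun h1 h2 => absurd ⟨h1, h2⟩ h⟩
    choose q hqQ hqsub using hq
    -- extending a countable subfamily of Q to a member of C
    have hext : ∀ A : Set (Set X), ∃ P ∈ C, (A.Countable → A ⊆ Q → A ⊆ P) := by
      intro A
      by_cases h : A.Countable ∧ A ⊆ Q
      · obtain ⟨P, hP, hAP⟩ := hC3 A h.1 h.2
        exact ⟨P, hP, fun _ _ => hAP⟩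
      · obtain ⟨P, hP, -⟩ := hC3 ∅ countable_empty (empty_subset _)
        exact ⟨P, hP, fun h1 h2 => absurd ⟨h1, h2⟩ h⟩
    choose ext hextC hextsub using hext
    -- every member of C is nonempty (X is nonempty)
    have hCne : ∀ P ∈ C, P.Nonempty := by
      intro P hP
      obtain ⟨W, hW, -⟩ := hC4 univ isOpen_univ univ_nonempty P hP
      exact ⟨W, hW⟩
    -- an enumeration of each member of C
    have henum' : ∀ P : Set (Set X), ∃ f : ℕ → Set X, (P ∈ C → P = Set.range f) := by
      intro P
      by_cases h : P ∈ C
      · obtain ⟨f, hf⟩ := ((hC1 P h).1).exists_eq_range (hCne P h)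
        exact ⟨f, fun _ => hf⟩
      · exact ⟨fun _ => q₀, fun hm => absurd hm h⟩
    choose enum henum using henum'
    -- the bookkeeping state
    set step : Set (Set X) → Set (Set X) → Set (Set X) := fun P b => ext (P ∪ q '' b) with hstepdef
    set Pst : List (Set (Set X)) → Set (Set X) := fun l => l.foldl step (ext ∅) with hPstdef
    have hPst_app : ∀ l b, Pst (l ++ [b]) = step (Pst l) b := by
      intro l b; simp [hPstdef, List.foldl_append]
    have hPstC : ∀ l, Pst l ∈ C := by
      intro l
      induction l using List.reverseRecOn with
      | nil => exact hextC ∅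
      | append_singleton l b ih => rw [hPst_app]; exact hextC _
    have hmemenum : ∀ l m, enum (Pst l) m ∈ Pst l := by
      intro l m
      have := mem_range_self (f := enum (Pst l)) m
      rwa [← henum _ (hPstC l)] at this
    -- the strategy
    set σ : List (Set (Set X)) → Set (Set X) := fun l =>
      (fun p : ℕ × ℕ => enum (Pst (l.take p.1)) p.2) '' (Set.Iic l.length ×ˢ Set.Iic l.length)
      with hσdef
    refine ⟨σ, ?_, ?_⟩
    · intro l
      refine ⟨((Set.finite_Iic _).prod (Set.finite_Iic _)).image _, ?_⟩
      rintro U ⟨p, -, rfl⟩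
      exact hQ1 _ ((hC1 _ (hPstC _)).2 (hmemenum _ _))
    · intro B hB k
      set L : ℕ → List (Set (Set X)) := fun n => (List.range n).map B with hLdef
      have hLlen : ∀ n, (L n).length = n := by intro n; simp [hLdef]
      have hLsucc : ∀ n, L (n + 1) = L n ++ [B n] := by
        intro n; simp [hLdef, List.range_succ]
      have hLtake : ∀ {j n : ℕ}, j ≤ n → (L n).take j = L j := by
        intro j n hj
        simp only [hLdef, ← List.map_take, List.take_range, Nat.min_eq_left hj]
      have hBmove : ∀ n, IMove X (B n) := fun n => (hB n).1
      have hPn_succ : ∀ n, Pst (L (n + 1)) = ext (Pst (L n) ∪ q '' B n) := by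
        intro n; rw [hLsucc, hPst_app]
      have hgrow : ∀ n, Pst (L n) ∪ q '' B n ⊆ Pst (L (n + 1)) := by
        intro n
        rw [hPn_succ]
        refine hextsub _ ?_ ?_
        · exact ((hC1 _ (hPstC _)).1).union ((hBmove n).1.image q).countable
        · refine union_subset (hC1 _ (hPstC _)).2 ?_
          rintro U ⟨V', hV', rfl⟩
          exact hqQ V'
      have hmono : Monotone fun n => Pst (L n) := by
        apply monotone_nat_of_le_succ
        intro n
        exact subset_union_left.trans (hgrow n)
      have hPinf : (⋃ n, Pst (L n)) ∈ C := hC2 _ (fun n => hPstC _) hmono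
      rw [dense_iff_inter_open]
      intro V hV hVne
      obtain ⟨W, hWP, hWprop⟩ := hC4 V hV hVne _ hPinf
      obtain ⟨j, hWj⟩ := mem_iUnion.1 hWP
      obtain ⟨m, hWm⟩ : ∃ m, enum (Pst (L j)) m = W := by
        have := hWj
        rw [henum _ (hPstC (L j))] at this
        exact this
      set n : ℕ := max (max j m) k with hn
      have hjn : j ≤ n := le_trans (le_max_left j m) (le_max_left _ k)
      have hmn : m ≤ n := le_trans (le_max_right j m) (le_max_left _ k)
      have hkn : k ≤ n := le_max_right _ k
      have hWσ : W ∈ σ (L n) := by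
        refine ⟨(j, m), ?_, ?_⟩
        · constructor <;> simp [hLlen, hjn, hmn]
        · simp only [hLtake hjn, hWm]
      obtain ⟨V', hV'B, hV'W⟩ := (hB n).2 W hWσ
      have hV'open := ((hB n).1.2 V' hV'B).1
      have hV'ne := ((hB n).1.2 V' hV'B).2
      have hqV' : q V' ⊆ V' := hqsub V' hV'open hV'ne
      have hqmem : q V' ∈ ⋃ n, Pst (L n) := by
        refine mem_iUnion.2 ⟨n + 1, hgrow n (Or.inr (mem_image_of_mem q hV'B))⟩
      obtain ⟨x, hx1, hx2⟩ := hWprop (q V') hqmem (hqV'.trans hV'W)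
      refine ⟨x, hx2, ?_⟩
      exact mem_iUnion.2 ⟨n, mem_iUnion.2 ⟨hkn, ⟨V', hV'B, hqV' hx1⟩⟩⟩
  · -- X is empty: everything is dense
    refine ⟨fun _ => ∅, fun _ => ⟨finite_empty, by simp⟩, ?_⟩
    intro B _ k
    rw [dense_iff_inter_open]
    rintro U - ⟨x, -⟩
    exact absurd ⟨x⟩ hX

/-- A topological space is I-favorable if and only if it has a club filter
(with respect to some π-base). -/
theorem iFavorable_iff_clubFilter (X : Type*) [TopologicalSpace X] :
    IFavorable X ↔
      ∃ Q : Set (Set X), IsPiBase X Q ∧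
        ∃ C : Set (Set (Set X)), IsClubFilter X Q C := by
  constructor
  · exact IFav.forward X
  · rintro ⟨Q, hQ, C, hC⟩
    exact IFav.backward X Q hQ C hC
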